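/- arXiv:1408.5363 — 2 statements merged into one kernel-verified Lean document; each statement's English description precedes it below -/
import Mathlib

section
/- For all nonzero vectors ξ, η ∈ ℝ³ and each index j ∈ {1,2,3}, the symbol q₀ⱼ(ξ,η) = −⟨ξ⟩ηⱼ + ξⱼ⟨η⟩ satisfies |q₀ⱼ(ξ,η)| ≲ |ξ||η|θ(ξ,η) + |ξ|/⟨η⟩ + |η|/⟨ξ⟩, where θ(ξ,η) is the angle between ξ and η. -/
open scoped RealInnerProductSpace

noncomputable def jb (ξ : EuclideanSpace ℝ (Fin 3)) : ℝ := Real.sqrt (1 + ‖ξ‖ ^ 2)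

lemma comp_le (w : EuclideanSpace ℝ (Fin 3)) (j : Fin 3) : |w j| ≤ ‖w‖ := by
  rw [EuclideanSpace.norm_eq]
  have : |w j| = Real.sqrt (|w j| ^ 2) := by
    rw [Real.sqrt_sq (abs_nonneg _)]
  rw [this]
  apply Real.sqrt_le_sqrt
  exact Finset.single_le_sum (f := fun i => ‖w i‖ ^ 2) (fun i _ => by positivity)
    (Finset.mem_univ j) |>.trans_eq' (by simp [Real.norm_eq_abs])

lemma jb_one_le (ξ : EuclideanSpace ℝ (Fin 3)) : 1 ≤ jb ξ := by
  rw [jb]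
  calc (1:ℝ) = Real.sqrt 1 := Real.sqrt_one.symm
    _ ≤ Real.sqrt (1 + ‖ξ‖ ^ 2) := Real.sqrt_le_sqrt (by nlinarith [sq_nonneg ‖ξ‖])

lemma jb_sq (ξ : EuclideanSpace ℝ (Fin 3)) : jb ξ ^ 2 = 1 + ‖ξ‖ ^ 2 :=
  Real.sq_sqrt (by positivity)

lemma jb_sub (ξ : EuclideanSpace ℝ (Fin 3)) :
    0 ≤ jb ξ - ‖ξ‖ ∧ jb ξ - ‖ξ‖ ≤ 1 / jb ξ := by
  have h1 := jb_one_le ξ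
  have hpos : (0:ℝ) < jb ξ := by linarith
  have hkey : (jb ξ - ‖ξ‖) * (jb ξ + ‖ξ‖) = 1 := by
    have := jb_sq ξ; ring_nf; nlinarith [jb_sq ξ]
  have hsum : 0 < jb ξ + ‖ξ‖ := by positivity
  constructor
  · nlinarith
  · rw [div_eq_inv_mul, mul_one]
    rw [show jb ξ - ‖ξ‖ = (jb ξ + ‖ξ‖)⁻¹ by field_simp; nlinarith]
    apply inv_anti₀ hpos
    linarith [norm_nonneg ξ]

lemma chord_le (ξ η : EuclideanSpace ℝ (Fin 3)) (hξ : ξ ≠ 0) (hη : η ≠ 0) :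
    ‖‖ξ‖⁻¹ • ξ - ‖η‖⁻¹ • η‖ ≤ InnerProductGeometry.angle ξ η := by
  set u := ‖ξ‖⁻¹ • ξ
  set v := ‖η‖⁻¹ • η
  have hu : ‖u‖ = 1 := norm_smul_inv_norm hξ
  have hv : ‖v‖ = 1 := norm_smul_inv_norm hη
  have hang : InnerProductGeometry.angle u v = InnerProductGeometry.angle ξ η := by
    rw [InnerProductGeometry.angle_smul_left_of_pos _ _ (inv_pos.mpr (norm_pos_iff.mpr hξ)),
      InnerProductGeometry.angle_smul_right_of_pos _ _ (inv_pos.mpr (norm_pos_iff.mpr hη))]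
  set θ := InnerProductGeometry.angle ξ η with hθ
  have hcos : (inner ℝ u v : ℝ) = Real.cos θ := by
    rw [← hang, ← InnerProductGeometry.cos_angle_mul_norm_mul_norm, hu, hv]; ring
  have hsq : ‖u - v‖ ^ 2 = 2 - 2 * Real.cos θ := by
    rw [norm_sub_sq_real, hu, hv, hcos]; ring
  have hθ0 : 0 ≤ θ := InnerProductGeometry.angle_nonneg ξ η
  have hle : ‖u - v‖ ^ 2 ≤ θ ^ 2 := by
    rw [hsq]; nlinarith [Real.one_sub_sq_div_two_le_cos (x := θ)]
  calc ‖u - v‖ = Real.sqrt (‖u - v‖ ^ 2) := (Real.sqrt_sq (norm_nonneg _)).symm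
    _ ≤ Real.sqrt (θ ^ 2) := Real.sqrt_le_sqrt hle
    _ = θ := Real.sqrt_sq hθ0

theorem stmt1 :
    ∃ C : ℝ, 0 < C ∧ ∀ ξ η : EuclideanSpace ℝ (Fin 3), ξ ≠ 0 → η ≠ 0 → ∀ j : Fin 3,
      |(-(jb ξ * η j) + ξ j * jb η)| ≤
        C * (‖ξ‖ * ‖η‖ * InnerProductGeometry.angle ξ η + ‖ξ‖ / jb η + ‖η‖ / jb ξ) := by
  refine ⟨1, one_pos, fun ξ η hξ hη j => ?_⟩
  set a := ‖ξ‖ with ha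
  set b := ‖η‖ with hb
  have ha0 : 0 < a := norm_pos_iff.mpr hξ
  have hb0 : 0 < b := norm_pos_iff.mpr hη
  set u : EuclideanSpace ℝ (Fin 3) := a⁻¹ • ξ
  set v : EuclideanSpace ℝ (Fin 3) := b⁻¹ • η
  have hξj : ξ j = a * u j := by
    simp [u, PiLp.smul_apply, smul_eq_mul]
    field_simp
  have hηj : η j = b * v j := by
    simp [v, PiLp.smul_apply, smul_eq_mul]
    field_simp
  have key : -(jb ξ * η j) + ξ j * jb η =
      ξ j * (jb η - b) + a * b * (u j - v j) + η j * (a - jb ξ) := by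
    rw [hξj, hηj]; ring
  have h1 : |ξ j * (jb η - b)| ≤ a / jb η := by
    rw [abs_mul]
    have := jb_sub η
    have habs : |jb η - b| ≤ 1 / jb η := by
      rw [abs_of_nonneg this.1]; exact this.2
    calc |ξ j| * |jb η - b| ≤ a * (1 / jb η) :=
          mul_le_mul (comp_le ξ j) habs (abs_nonneg _) ha0.le
      _ = a / jb η := by ring
  have h3 : |η j * (a - jb ξ)| ≤ b / jb ξ := by
    rw [abs_mul]
    have := jb_sub ξ
    have habs : |a - jb ξ| ≤ 1 / jb ξ := by
      rw [abs_sub_comm, abs_of_nonneg this.1]; exact this.2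
    calc |η j| * |a - jb ξ| ≤ b * (1 / jb ξ) :=
          mul_le_mul (comp_le η j) habs (abs_nonneg _) hb0.le
      _ = b / jb ξ := by ring
  have h2 : |a * b * (u j - v j)| ≤ a * b * InnerProductGeometry.angle ξ η := by
    rw [abs_mul, abs_of_pos (by positivity : (0:ℝ) < a * b)]
    apply mul_le_mul_of_nonneg_left _ (by positivity)
    have huv : u j - v j = (u - v) j := by simp [PiLp.sub_apply]
    rw [huv]
    exact (comp_le (u - v) j).trans (chord_le ξ η hξ hη)
  calc |(-(jb ξ * η j) + ξ j * jb η)|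
      ≤ |ξ j * (jb η - b)| + |a * b * (u j - v j)| + |η j * (a - jb ξ)| := by
        rw [key]; exact (abs_add_le _ _).trans (by gcongr; exact abs_add_le _ _)
    _ ≤ a / jb η + a * b * InnerProductGeometry.angle ξ η + b / jb ξ := by
        gcongr
    _ = 1 * (a * b * InnerProductGeometry.angle ξ η + a / jb η + b / jb ξ) := by ring
end

section
/- Let α, β, γ ∈ [0, 1/2]. Then for all pairs of signs (±, ±'), all τ, λ ∈ ℝ and all nonzero ξ, η ∈ ℝ³, there is a constant C (depending only on α, β, γ) such that θ(±ξ, ±'η) ≤ C[ (⟨||τ+λ|−|ξ+η||⟩/min(⟨ξ⟩,⟨η⟩))^α + (⟨−τ±|ξ|⟩/min(⟨ξ⟩,⟨η⟩))^β + (⟨−λ±'|η|⟩/min(⟨ξ⟩,⟨η⟩))^γ ]. -/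
noncomputable def jbR (x : ℝ) : ℝ := Real.sqrt (1 + x ^ 2)

lemma jbR_ge_one (x : ℝ) : 1 ≤ jbR x := by
  unfold jbR
  nlinarith [Real.sq_sqrt (show (0:ℝ) ≤ 1 + x ^ 2 by positivity),
    Real.sqrt_nonneg (1 + x ^ 2), sq_nonneg x]

lemma jbR_ge_abs (x : ℝ) : |x| ≤ jbR x := by
  unfold jbR
  rw [← Real.sqrt_sq_eq_abs]
  exact Real.sqrt_le_sqrt (by linarith)

lemma my_sqrt_add_le (x y : ℝ) (hx : 0 ≤ x) (hy : 0 ≤ y) :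
    Real.sqrt (x + y) ≤ Real.sqrt x + Real.sqrt y := by
  have h1 := Real.sq_sqrt hx
  have h2 := Real.sq_sqrt hy
  have h3 : x + y ≤ (Real.sqrt x + Real.sqrt y) ^ 2 := by
    nlinarith [Real.sqrt_nonneg x, Real.sqrt_nonneg y]
  calc Real.sqrt (x + y) ≤ Real.sqrt ((Real.sqrt x + Real.sqrt y) ^ 2) :=
        Real.sqrt_le_sqrt h3
    _ = Real.sqrt x + Real.sqrt y := Real.sqrt_sq (by positivity)

lemma my_le_of_sq_le (a b : ℝ) (h : a ^ 2 ≤ b ^ 2) (hb : 0 ≤ b) : a ≤ b := by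
  nlinarith [sq_nonneg (a - b), sq_nonneg (a + b)]

lemma my_sqrt2_ub : Real.sqrt 2 ≤ 1.415 := by
  nlinarith [Real.sq_sqrt (show (0:ℝ) ≤ 2 by norm_num), Real.sqrt_nonneg 2,
    sq_nonneg (Real.sqrt 2 - 1.415)]

lemma my_pi2_sqrt2 : Real.pi ^ 2 * Real.sqrt 2 ≤ 16 := by
  have h1 := my_sqrt2_ub
  have h2 := Real.pi_lt_d2.le
  have h3 := Real.pi_pos
  have h4 := Real.sqrt_nonneg 2
  nlinarith

lemma my_pi_le_4s : Real.pi ≤ 4 * Real.sqrt ((Real.sqrt 2)⁻¹) := by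
  have hub := my_sqrt2_ub
  have hs2n := Real.sqrt_nonneg 2
  have hpos : (0:ℝ) < Real.sqrt 2 := by
    nlinarith [Real.sq_sqrt (show (0:ℝ) ≤ 2 by norm_num)]
  have hs0 : 0 ≤ Real.sqrt ((Real.sqrt 2)⁻¹) := Real.sqrt_nonneg _
  have hssq : (Real.sqrt ((Real.sqrt 2)⁻¹)) ^ 2 = (Real.sqrt 2)⁻¹ :=
    Real.sq_sqrt (by positivity)
  have hinv : (0.7067:ℝ) ≤ (Real.sqrt 2)⁻¹ := by
    rw [← one_div, le_div_iff₀ hpos]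
    nlinarith
  have hlb : (0.84:ℝ) ≤ Real.sqrt ((Real.sqrt 2)⁻¹) := by
    apply my_le_of_sq_le _ _ _ hs0
    rw [hssq]
    nlinarith
  linarith [Real.pi_lt_d2.le]

lemma stmt13_scalar (α β γ A B w₁ w₂ w₃ θ : ℝ)
    (hα : α ∈ Set.Icc (0 : ℝ) (1 / 2)) (hβ : β ∈ Set.Icc (0 : ℝ) (1 / 2))
    (hγ : γ ∈ Set.Icc (0 : ℝ) (1 / 2))
    (hA : 0 < A) (hB : 0 < B)
    (hw₁ : 1 ≤ w₁) (hw₂ : 1 ≤ w₂) (hw₃ : 1 ≤ w₃)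
    (hθ0 : 0 ≤ θ) (hθπ : θ ≤ Real.pi)
    (hkey : A * B * (1 - Real.cos θ) ≤ (A + B) * (w₁ + w₂ + w₃)) :
    θ ≤ 4 * ((w₁ / min (Real.sqrt (1 + A ^ 2)) (Real.sqrt (1 + B ^ 2))) ^ α +
             (w₂ / min (Real.sqrt (1 + A ^ 2)) (Real.sqrt (1 + B ^ 2))) ^ β +
             (w₃ / min (Real.sqrt (1 + A ^ 2)) (Real.sqrt (1 + B ^ 2))) ^ γ) := by
  obtain ⟨hα0, hα2⟩ := hα
  obtain ⟨hβ0, hβ2⟩ := hβ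
  obtain ⟨hγ0, hγ2⟩ := hγ
  set M := min (Real.sqrt (1 + A ^ 2)) (Real.sqrt (1 + B ^ 2)) with hMdef
  have hsqA := Real.sq_sqrt (show (0:ℝ) ≤ 1 + A ^ 2 by positivity)
  have hsqB := Real.sq_sqrt (show (0:ℝ) ≤ 1 + B ^ 2 by positivity)
  have hM1 : 1 ≤ M := le_min (jbR_ge_one A) (jbR_ge_one B)
  have hM0 : 0 < M := lt_of_lt_of_le one_pos hM1
  set r₁ := w₁ / M with hr₁def
  set r₂ := w₂ / M with hr₂def
  set r₃ := w₃ / M with hr₃def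
  have hr₁0 : 0 < r₁ := div_pos (by linarith) hM0
  have hr₂0 : 0 < r₂ := div_pos (by linarith) hM0
  have hr₃0 : 0 < r₃ := div_pos (by linarith) hM0
  have ht₁0 : 0 ≤ r₁ ^ α := Real.rpow_nonneg hr₁0.le α
  have ht₂0 : 0 ≤ r₂ ^ β := Real.rpow_nonneg hr₂0.le β
  have ht₃0 : 0 ≤ r₃ ^ γ := Real.rpow_nonneg hr₃0.le γ
  have hπ4 := Real.pi_le_four
  by_cases hc1 : 1 ≤ r₁
  · have h1 : 1 ≤ r₁ ^ α := Real.one_le_rpow hc1 hα0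
    linarith
  by_cases hc2 : 1 ≤ r₂
  · have h1 : 1 ≤ r₂ ^ β := Real.one_le_rpow hc2 hβ0
    linarith
  by_cases hc3 : 1 ≤ r₃
  · have h1 : 1 ≤ r₃ ^ γ := Real.one_le_rpow hc3 hγ0
    linarith
  push_neg at hc1 hc2 hc3
  have hs₁ : Real.sqrt r₁ ≤ r₁ ^ α := by
    rw [Real.sqrt_eq_rpow]
    exact Real.rpow_le_rpow_of_exponent_ge hr₁0 hc1.le hα2
  have hs₂ : Real.sqrt r₂ ≤ r₂ ^ β := by
    rw [Real.sqrt_eq_rpow]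
    exact Real.rpow_le_rpow_of_exponent_ge hr₂0 hc2.le hβ2
  have hs₃ : Real.sqrt r₃ ≤ r₃ ^ γ := by
    rw [Real.sqrt_eq_rpow]
    exact Real.rpow_le_rpow_of_exponent_ge hr₃0 hc3.le hγ2
  have hsqrt2 := Real.sq_sqrt (show (0:ℝ) ≤ 2 by norm_num)
  have hsqrt2nn := Real.sqrt_nonneg 2
  by_cases hm : Real.sqrt 2 ≤ M
  · -- main case: min norm ≥ 1
    set m := min A B with hmdef
    have hm0 : 0 < m := lt_min hA hB
    have hMsq : M ^ 2 ≤ 1 + m ^ 2 := by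
      rcases le_total A B with h | h
      · rw [hmdef, min_eq_left h]
        calc M ^ 2 ≤ (Real.sqrt (1 + A ^ 2)) ^ 2 :=
              pow_le_pow_left₀ hM0.le (min_le_left _ _) 2
          _ = 1 + A ^ 2 := hsqA
      · rw [hmdef, min_eq_right h]
        calc M ^ 2 ≤ (Real.sqrt (1 + B ^ 2)) ^ 2 :=
              pow_le_pow_left₀ hM0.le (min_le_right _ _) 2
          _ = 1 + B ^ 2 := hsqB
    have hm2 : 2 ≤ M ^ 2 := by
      calc (2:ℝ) = (Real.sqrt 2) ^ 2 := hsqrt2.symm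
        _ ≤ M ^ 2 := pow_le_pow_left₀ hsqrt2nn hm 2
    have hm1 : 1 ≤ m := by
      apply my_le_of_sq_le 1 m _ hm0.le
      rw [one_pow]; linarith
    have hMm : M ≤ Real.sqrt 2 * m := by
      apply my_le_of_sq_le _ _ _ (by positivity)
      have hexp : (Real.sqrt 2 * m) ^ 2 = 2 * m ^ 2 := by rw [mul_pow, hsqrt2]
      rw [hexp]
      have hm1sq : (1:ℝ) ≤ m ^ 2 := by
        calc (1:ℝ) = 1 ^ 2 := by norm_num
          _ ≤ m ^ 2 := pow_le_pow_left₀ zero_le_one hm1 2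
      linarith
    set W := w₁ + w₂ + w₃ with hWdef
    have hW0 : 0 < W := by rw [hWdef]; linarith
    have hθ2 : 2 * θ ^ 2 ≤ Real.pi ^ 2 * (1 - Real.cos θ) := by
      have h := Real.cos_le_one_sub_mul_cos_sq (x := θ) (by rw [abs_of_nonneg hθ0]; exact hθπ)
      have hp2 : (0:ℝ) < Real.pi ^ 2 := by positivity
      have h2 := mul_le_mul_of_nonneg_left h hp2.le
      have hexp : Real.pi ^ 2 * (1 - 2 / Real.pi ^ 2 * θ ^ 2) = Real.pi ^ 2 - 2 * θ ^ 2 := by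
        field_simp
      rw [hexp] at h2
      have hrng : Real.pi ^ 2 * (1 - Real.cos θ) =
          Real.pi ^ 2 - Real.pi ^ 2 * Real.cos θ := by ring
      linarith
    have hABpos : 0 < A * B := mul_pos hA hB
    have hmc : m * (1 - Real.cos θ) ≤ 2 * W := by
      have hmin : m * (A + B) ≤ 2 * (A * B) := by
        have e1 := mul_le_mul_of_nonneg_left (min_le_left A B) hB.le
        have e2 := mul_le_mul_of_nonneg_left (min_le_right A B) hA.le
        rw [hmdef]; linarith [e1, e2]
      have h5 := mul_le_mul_of_nonneg_left hkey hm0.le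
      have h6 := mul_le_mul_of_nonneg_right hmin hW0.le
      have h7 : (A * B) * (m * (1 - Real.cos θ)) ≤ (A * B) * (2 * W) := by
        linarith [h5, h6]
      exact le_of_mul_le_mul_left h7 hABpos
    have hθsq : m * θ ^ 2 ≤ Real.pi ^ 2 * W := by
      have h7 := mul_le_mul_of_nonneg_left hθ2 hm0.le
      have h8 := mul_le_mul_of_nonneg_left hmc (show (0:ℝ) ≤ Real.pi ^ 2 by positivity)
      linarith [h7, h8]
    have h10 : θ ^ 2 * M ≤ Real.pi ^ 2 * Real.sqrt 2 * W := by
      have h11 : θ ^ 2 * M ≤ θ ^ 2 * (Real.sqrt 2 * m) :=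
        mul_le_mul_of_nonneg_left hMm (sq_nonneg θ)
      have h13 : Real.sqrt 2 * (m * θ ^ 2) ≤ Real.sqrt 2 * (Real.pi ^ 2 * W) :=
        mul_le_mul_of_nonneg_left hθsq hsqrt2nn
      linarith [h11, h13]
    have hθsq2 : θ ^ 2 ≤ Real.pi ^ 2 * Real.sqrt 2 * (W / M) := by
      rw [← mul_div_assoc, le_div_iff₀ hM0]
      exact h10
    have hWMr : W / M = r₁ + r₂ + r₃ := by
      rw [hr₁def, hr₂def, hr₃def, hWdef]
      field_simp
    have hWM0 : 0 ≤ W / M := le_of_lt (div_pos hW0 hM0)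
    have hT : Real.sqrt (W / M) ≤ r₁ ^ α + r₂ ^ β + r₃ ^ γ := by
      rw [hWMr]
      calc Real.sqrt (r₁ + r₂ + r₃) ≤ Real.sqrt (r₁ + r₂) + Real.sqrt r₃ :=
            my_sqrt_add_le _ _ (by linarith) hr₃0.le
        _ ≤ (Real.sqrt r₁ + Real.sqrt r₂) + Real.sqrt r₃ := by
            linarith [my_sqrt_add_le r₁ r₂ hr₁0.le hr₂0.le]
        _ ≤ r₁ ^ α + r₂ ^ β + r₃ ^ γ := by linarith
    set T := r₁ ^ α + r₂ ^ β + r₃ ^ γ with hTdef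
    have hT0 : 0 ≤ T := by rw [hTdef]; linarith
    have hRT : W / M ≤ T ^ 2 := by
      have e1 := Real.sq_sqrt hWM0
      have e2 := pow_le_pow_left₀ (Real.sqrt_nonneg (W / M)) hT 2
      linarith
    have hfin : θ ^ 2 ≤ 16 * T ^ 2 := by
      have e1 := mul_le_mul_of_nonneg_left hRT
        (show (0:ℝ) ≤ Real.pi ^ 2 * Real.sqrt 2 by positivity)
      have e2 := mul_le_mul_of_nonneg_right my_pi2_sqrt2 (sq_nonneg T)
      exact le_trans (le_trans hθsq2 e1) e2
    calc θ = Real.sqrt (θ ^ 2) := (Real.sqrt_sq hθ0).symm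
      _ ≤ Real.sqrt (16 * T ^ 2) := Real.sqrt_le_sqrt hfin
      _ = 4 * T := by
          rw [show (16:ℝ) * T ^ 2 = (4 * T) ^ 2 by ring]
          exact Real.sqrt_sq (by linarith)
  · -- small frequency case : M < √2
    push_neg at hm
    have hrge : (Real.sqrt 2)⁻¹ ≤ r₁ := by
      have h1 : (Real.sqrt 2)⁻¹ ≤ M⁻¹ := by
        apply inv_anti₀ hM0 hm.le
      have h2 : 1 / M ≤ w₁ / M := by gcongr
      rw [hr₁def]
      rw [one_div] at h2
      linarith
    have hle : Real.sqrt ((Real.sqrt 2)⁻¹) ≤ Real.sqrt r₁ := Real.sqrt_le_sqrt hrge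
    linarith [my_pi_le_4s, hle.trans hs₁]

theorem stmt13 (α β γ : ℝ) (hα : α ∈ Set.Icc (0 : ℝ) (1 / 2))
    (hβ : β ∈ Set.Icc (0 : ℝ) (1 / 2)) (hγ : γ ∈ Set.Icc (0 : ℝ) (1 / 2)) :
    ∃ C : ℝ, 0 < C ∧
      ∀ s₁ s₂ : ℝ, (s₁ = 1 ∨ s₁ = -1) → (s₂ = 1 ∨ s₂ = -1) →
      ∀ (τ lam : ℝ) (ξ η : EuclideanSpace ℝ (Fin 3)), ξ ≠ 0 → η ≠ 0 →
        InnerProductGeometry.angle (s₁ • ξ) (s₂ • η) ≤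
          C * ((jbR (|τ + lam| - ‖ξ + η‖) / min (jb ξ) (jb η)) ^ α +
               (jbR (-τ + s₁ * ‖ξ‖) / min (jb ξ) (jb η)) ^ β +
               (jbR (-lam + s₂ * ‖η‖) / min (jb ξ) (jb η)) ^ γ) := by
  refine ⟨4, by norm_num, ?_⟩
  intro s₁ s₂ hs₁ hs₂ τ lam ξ η hξ hη
  have hA : 0 < ‖ξ‖ := norm_pos_iff.mpr hξ
  have hB : 0 < ‖η‖ := norm_pos_iff.mpr hη
  simp only [jb]
  set A := ‖ξ‖ with hAdef
  set B := ‖η‖ with hBdef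
  set E := ‖ξ + η‖ with hEdef
  set c := (inner ℝ ξ η : ℝ) with hcdef
  have hE2 : E ^ 2 = A ^ 2 + 2 * c + B ^ 2 := norm_add_sq_real ξ η
  have hEle : E ≤ A + B := norm_add_le ξ η
  have hE0 : 0 ≤ E := norm_nonneg _
  have hEabs : |A - B| ≤ E := by
    have h := abs_norm_sub_norm_le ξ (-η)
    simpa [hEdef, hAdef, hBdef, sub_neg_eq_add, norm_neg] using h
  have hw₁1 : 1 ≤ jbR (|τ + lam| - E) := jbR_ge_one _
  have hw₂1 : 1 ≤ jbR (-τ + s₁ * A) := jbR_ge_one _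
  have hw₃1 : 1 ≤ jbR (-lam + s₂ * B) := jbR_ge_one _
  obtain ⟨hw₁l, hw₁r⟩ := abs_le.mp (jbR_ge_abs (|τ + lam| - E))
  obtain ⟨hw₂l, hw₂r⟩ := abs_le.mp (jbR_ge_abs (-τ + s₁ * A))
  obtain ⟨hw₃l, hw₃r⟩ := abs_le.mp (jbR_ge_abs (-lam + s₂ * B))
  set w₁ := jbR (|τ + lam| - E) with hw₁def
  set w₂ := jbR (-τ + s₁ * A) with hw₂def
  set w₃ := jbR (-lam + s₂ * B) with hw₃def
  have hθ0 : 0 ≤ InnerProductGeometry.angle (s₁ • ξ) (s₂ • η) :=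
    InnerProductGeometry.angle_nonneg _ _
  have hθπ : InnerProductGeometry.angle (s₁ • ξ) (s₂ • η) ≤ Real.pi :=
    InnerProductGeometry.angle_le_pi _ _
  have hcosgen : Real.cos (InnerProductGeometry.angle (s₁ • ξ) (s₂ • η)) =
      s₁ * s₂ * c / (A * B) := by
    have h := InnerProductGeometry.cos_angle (s₁ • ξ) (s₂ • η)
    rw [real_inner_smul_left, real_inner_smul_right, norm_smul, norm_smul,
      ← hcdef, ← hAdef, ← hBdef] at h
    rcases hs₁ with rfl | rfl <;> rcases hs₂ with rfl | rfl <;>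
      · simp only [norm_one, norm_neg] at h; rw [h]; ring
  have hABpos : 0 < A * B := mul_pos hA hB
  have hkey : A * B * (1 - Real.cos (InnerProductGeometry.angle (s₁ • ξ) (s₂ • η))) ≤
      (A + B) * (w₁ + w₂ + w₃) := by
    rw [hcosgen]
    have habsu := abs_cases (τ + lam)
    rcases hs₁ with rfl | rfl <;> rcases hs₂ with rfl | rfl
    · -- s₁ = 1, s₂ = 1
      have hD : A + B - E ≤ w₁ + w₂ + w₃ := by
        rcases habsu with ⟨h1, _⟩ | ⟨h1, _⟩ <;> linarith
      have hsum : A + B + E ≤ 2 * (A + B) := by linarith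
      have hprod : (A + B - E) * (A + B + E) ≤ (w₁ + w₂ + w₃) * (2 * (A + B)) :=
        mul_le_mul hD hsum (by linarith) (by linarith)
      rw [show (1:ℝ) * 1 * c / (A * B) = c / (A * B) by ring,
        mul_sub, mul_one, mul_div_cancel₀ c (ne_of_gt hABpos)]
      linarith [hprod, hE2]
    · -- s₁ = 1, s₂ = -1
      have hD : E - |A - B| ≤ w₁ + w₂ + w₃ := by
        rcases habsu with ⟨h1, _⟩ | ⟨h1, _⟩ <;> rcases abs_cases (A - B) with ⟨h2, _⟩ | ⟨h2, _⟩ <;>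
          linarith
      have hsum : E + |A - B| ≤ 2 * (A + B) := by
        rcases abs_cases (A - B) with ⟨h2, _⟩ | ⟨h2, _⟩ <;> linarith
      have hprod : (E - |A - B|) * (E + |A - B|) ≤ (w₁ + w₂ + w₃) * (2 * (A + B)) :=
        mul_le_mul hD hsum (by positivity) (by linarith)
      rw [show (1:ℝ) * -1 * c / (A * B) = -(c / (A * B)) by ring,
        mul_sub, mul_one, mul_neg, mul_div_cancel₀ c (ne_of_gt hABpos)]
      linarith [hprod, hE2, sq_abs (A - B)]
    · -- s₁ = -1, s₂ = 1
      have hD : E - |A - B| ≤ w₁ + w₂ + w₃ := by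
        rcases habsu with ⟨h1, _⟩ | ⟨h1, _⟩ <;> rcases abs_cases (A - B) with ⟨h2, _⟩ | ⟨h2, _⟩ <;>
          linarith
      have hsum : E + |A - B| ≤ 2 * (A + B) := by
        rcases abs_cases (A - B) with ⟨h2, _⟩ | ⟨h2, _⟩ <;> linarith
      have hprod : (E - |A - B|) * (E + |A - B|) ≤ (w₁ + w₂ + w₃) * (2 * (A + B)) :=
        mul_le_mul hD hsum (by positivity) (by linarith)
      rw [show (-1:ℝ) * 1 * c / (A * B) = -(c / (A * B)) by ring,
        mul_sub, mul_one, mul_neg, mul_div_cancel₀ c (ne_of_gt hABpos)]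
      linarith [hprod, hE2, sq_abs (A - B)]
    · -- s₁ = -1, s₂ = -1
      have hD : A + B - E ≤ w₁ + w₂ + w₃ := by
        rcases habsu with ⟨h1, _⟩ | ⟨h1, _⟩ <;> linarith
      have hsum : A + B + E ≤ 2 * (A + B) := by linarith
      have hprod : (A + B - E) * (A + B + E) ≤ (w₁ + w₂ + w₃) * (2 * (A + B)) :=
        mul_le_mul hD hsum (by linarith) (by linarith)
      rw [show (-1:ℝ) * -1 * c / (A * B) = c / (A * B) by ring,
        mul_sub, mul_one, mul_div_cancel₀ c (ne_of_gt hABpos)]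
      linarith [hprod, hE2]
  exact stmt13_scalar α β γ A B w₁ w₂ w₃
    (InnerProductGeometry.angle (s₁ • ξ) (s₂ • η)) hα hβ hγ hA hB hw₁1 hw₂1 hw₃1 hθ0 hθπ hkey
end
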